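/- arXiv:2301.01374 — 2 statements merged into one kernel-verified Lean document; each statement's English description precedes it below -/
import Mathlib

section
/- Let ψ : C → ℝ be strictly Σ-convex, let c ∈ C, and let l ∈ ℝ^n satisfy ∑_{i=1}^n l_i v_i = −c and {i : l_i < 0} ⊆ σ for some maximal cone σ ∈ Σ^max. Then −∑_{i=1}^n l_i ψ(v_i) ≤ ψ(c), and equality holds if and only if there exists a cone of Σ containing c and all the vectors v_i with l_i ≠ 0. -/
open scoped BigOperators Classical

noncomputable section

namespace BBGKZ

/-- The real vector corresponding to the `i`-th integer vector `v i`. -/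
def vR {r n : ℕ} (v : Fin n → Fin r → ℤ) (i : Fin n) : Fin r → ℝ := fun j => (v i j : ℝ)

/-- The complex vector corresponding to the `i`-th integer vector `v i`. -/
def vC {r n : ℕ} (v : Fin n → Fin r → ℤ) (i : Fin n) : Fin r → ℂ := fun j => (v i j : ℂ)

/-- The real vector corresponding to an integer vector. -/
def intVec {r : ℕ} (c : Fin r → ℤ) : Fin r → ℝ := fun j => (c j : ℝ)

/-- The complex vector corresponding to an integer vector. -/
def intVecC {r : ℕ} (c : Fin r → ℤ) : Fin r → ℂ := fun j => (c j : ℂ)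

/-- The cone `C = ∑ ℝ_{≥0} v_i`. -/
def coneC {r n : ℕ} (v : Fin n → Fin r → ℤ) : Set (Fin r → ℝ) :=
  {x | ∃ t : Fin n → ℝ, (∀ i, 0 ≤ t i) ∧ x = ∑ i, t i • vR v i}

/-- The cone `σ_I = ∑_{i ∈ I} ℝ_{≥0} v_i`. -/
def sigmaCone {r n : ℕ} (v : Fin n → Fin r → ℤ) (I : Finset (Fin n)) : Set (Fin r → ℝ) :=
  {x | ∃ t : Fin n → ℝ, (∀ i, 0 ≤ t i) ∧ (∀ i, i ∉ I → t i = 0) ∧ x = ∑ i, t i • vR v i}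

/-- `v_I = ∑_{i ∈ I} v_i`. -/
def vSum {r n : ℕ} (v : Fin n → Fin r → ℤ) (I : Finset (Fin n)) : Fin r → ℤ := ∑ i ∈ I, v i

/-- `Vol_I`: the absolute value of the determinant of the `r × r` matrix whose rows are the
vectors `v i`, `i ∈ I` (defined when `I.card = r`, and `0` otherwise). -/
def Vol {r n : ℕ} (v : Fin n → Fin r → ℤ) (I : Finset (Fin n)) : ℝ :=
  if h : I.card = r then
    |(Matrix.of fun a b : Fin r => vR v (I.orderIsoOfFin h a).1 b).det| else 0

/-- A vector of `ℝ^r` is generic if it lies in no proper linear subspace spanned by integer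
vectors. -/
def GenericVec {r : ℕ} (w : Fin r → ℝ) : Prop :=
  ∀ T : Set (Fin r → ℤ), Submodule.span ℝ (intVec '' T) ≠ ⊤ → w ∉ Submodule.span ℝ (intVec '' T)

/-- The value at `β ∈ ℂ^r` of the `ℂ`-linear extension of `μ : ℝ^r → ℝ`. -/
def muC {r : ℕ} (μ : (Fin r → ℝ) →ₗ[ℝ] ℝ) (β : Fin r → ℂ) : ℂ :=
  ∑ j, β j * (μ (Pi.single j 1) : ℂ)

/-- A solution of `bbGKZ(S, 0)` on `U`, where `S` is `C` or `C°`. -/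
def IsSol0 {r n : ℕ} (v : Fin n → Fin r → ℤ) (S : Set (Fin r → ℝ))
    (U : Set (Fin n → ℂ)) (Φ : (Fin r → ℤ) → (Fin n → ℂ) → ℂ) : Prop :=
  (∀ c : Fin r → ℤ, intVec c ∈ S → DifferentiableOn ℂ (Φ c) U) ∧
  (∀ c : Fin r → ℤ, intVec c ∈ S → ∀ i : Fin n, ∀ x ∈ U,
      fderiv ℂ (Φ c) x (Pi.single i 1) = Φ (c + v i) x) ∧
  (∀ c : Fin r → ℤ, intVec c ∈ S → ∀ μ : (Fin r → ℝ) →ₗ[ℝ] ℝ, ∀ x ∈ U,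
      (∑ i, (μ (vR v i) : ℂ) * x i * fderiv ℂ (Φ c) x (Pi.single i 1))
        + (μ (intVec c) : ℂ) * Φ c x = 0)

/-- A solution of `bbGKZ(S, β)` on `U`. -/
def IsSolBeta {r n : ℕ} (v : Fin n → Fin r → ℤ) (S : Set (Fin r → ℝ)) (β : Fin r → ℂ)
    (U : Set (Fin n → ℂ)) (Φ : (Fin r → ℤ) → (Fin n → ℂ) → ℂ) : Prop :=
  (∀ c : Fin r → ℤ, intVec c ∈ S → DifferentiableOn ℂ (Φ c) U) ∧
  (∀ c : Fin r → ℤ, intVec c ∈ S → ∀ i : Fin n, ∀ x ∈ U,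
      fderiv ℂ (Φ c) x (Pi.single i 1) = Φ (c + v i) x) ∧
  (∀ c : Fin r → ℤ, intVec c ∈ S → ∀ μ : (Fin r → ℝ) →ₗ[ℝ] ℝ, ∀ x ∈ U,
      (∑ i, (μ (vR v i) : ℂ) * x i * fderiv ℂ (Φ c) x (Pi.single i 1))
        + ((μ (intVec c) : ℂ) - muC μ β) * Φ c x = 0)

/-- The coefficients `ξ_{c,d,I}` determined by a generic vector `v0 ∈ C°`:
`ξ_{c,d,I} = (-1)^{deg c}` if `σ_I` is `r`-dimensional and for all sufficiently small `ε > 0`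
both `c + ε v0` and `d - ε v0` lie in the interior of `σ_I`, and `0` otherwise. -/
def xiCoef {r n : ℕ} (v : Fin n → Fin r → ℤ) (degZ : (Fin r → ℤ) → ℤ) (v0 : Fin r → ℝ)
    (c d : Fin r → ℤ) (I : Finset (Fin n)) : ℂ :=
  if intVec c ∈ coneC v ∧ intVec d ∈ interior (coneC v) ∧ c + d = vSum v I ∧ I.card = r ∧
      Submodule.span ℝ (vR v '' (I : Set (Fin n))) = ⊤ ∧
      (∀ᶠ ε in nhdsWithin (0 : ℝ) (Set.Ioi 0),
        intVec c + ε • v0 ∈ interior (sigmaCone v I) ∧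
        intVec d - ε • v0 ∈ interior (sigmaCone v I))
  then (-1 : ℂ) ^ (degZ c) else 0

/-- The pairing `⟨Φ, Ψ⟩ = ∑_{c,d,I} ξ_{c,d,I} Vol_I (∏_{i∈I} x_i) Φ_c Ψ_d`, where the
(finitely supported) inner sum is over lattice points `c ∈ C`, `d ∈ C°` with `c + d = v_I`. -/
def pairingXi {r n : ℕ} (v : Fin n → Fin r → ℤ)
    (ξ : (Fin r → ℤ) → (Fin r → ℤ) → Finset (Fin n) → ℂ)
    (Φ Ψ : (Fin r → ℤ) → (Fin n → ℂ) → ℂ) (x : Fin n → ℂ) : ℂ :=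
  ∑ I ∈ Finset.powersetCard r (Finset.univ : Finset (Fin n)),
    ∑ᶠ c : Fin r → ℤ,
      (if intVec c ∈ coneC v ∧ intVec (vSum v I - c) ∈ interior (coneC v) then
        ξ c (vSum v I - c) I * (Vol v I : ℂ) * (∏ i ∈ I, x i) * Φ c x * Ψ (vSum v I - c) x
      else 0)

/-- A finite simplicial fan supported on `C` with rays among the `v_i`, encoded by the finite
family of index sets of its cones. -/
structure IsFan {r n : ℕ} (v : Fin n → Fin r → ℤ) (Fam : Finset (Finset (Fin n))) : Prop where
  indep : ∀ I ∈ Fam, LinearIndependent ℝ (fun i : {x : Fin n // x ∈ I} => vR v i.1)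
  downward : ∀ I ∈ Fam, ∀ J : Finset (Fin n), J ⊆ I → J ∈ Fam
  inter : ∀ I ∈ Fam, ∀ J ∈ Fam, ∃ K ∈ Fam, K ⊆ I ∧ K ⊆ J ∧
    sigmaCone v I ∩ sigmaCone v J = sigmaCone v K
  max_cones : ∀ I ∈ Fam, ∃ J ∈ Fam, I ⊆ J ∧ J.card = r
  union_eq : (⋃ I ∈ (Fam : Set (Finset (Fin n))), sigmaCone v I) = coneC v

/-- `ψ` is strictly `Σ`-convex. -/
def StrictSigmaConvex {r n : ℕ} (v : Fin n → Fin r → ℤ) (Fam : Finset (Finset (Fin n)))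
    (ψ : (Fin r → ℝ) → ℝ) : Prop :=
  ∀ I ∈ Fam, I.card = r → ∃ ℓ : (Fin r → ℝ) →ₗ[ℝ] ℝ,
    (∀ x ∈ sigmaCone v I, ψ x = ℓ x) ∧ (∀ x ∈ coneC v, x ∉ sigmaCone v I → ℓ x < ψ x)

/-- The minimal cone of the fan containing a given point. -/
def IsMinConeOf {r n : ℕ} (v : Fin n → Fin r → ℤ) (Fam : Finset (Finset (Fin n)))
    (K : Finset (Fin n)) (w : Fin r → ℝ) : Prop :=
  K ∈ Fam ∧ w ∈ sigmaCone v K ∧ ∀ K' ∈ Fam, w ∈ sigmaCone v K' → K ⊆ K'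

/-- The cone `C_Σ` of the secondary fan corresponding to `Σ`. -/
def CSigma {r n : ℕ} (v : Fin n → Fin r → ℤ) (Fam : Finset (Finset (Fin n))) :
    Set (Fin n → ℝ) :=
  {η | ∀ I ∈ Fam, I.card = r → ∀ ℓ : (Fin r → ℝ) →ₗ[ℝ] ℝ,
    (∀ i ∈ I, ℓ (vR v i) = η i) → ∀ j, ℓ (vR v j) ≤ η j}

/-- The index set `L_{c,γ,σ;β}` of the Γ-series. -/
def Lset {r n : ℕ} (v : Fin n → Fin r → ℤ) (I0 : Finset (Fin n)) (β : Fin r → ℂ)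
    (c γ : Fin r → ℤ) : Set (Fin n → ℂ) :=
  {l | (∑ i, l i • vC v i) = β - intVecC c
    ∧ (∀ i ∉ I0, ∃ m : ℤ, l i = (m : ℂ))
    ∧ (∃ m : Fin n → ℤ,
        intVecC c + ∑ i ∈ I0ᶜ, l i • vC v i = -intVecC γ + ∑ i ∈ I0, (m i : ℂ) • vC v i)}

/-- An individual term `∏_i exp(l_i Log x_i)/Γ(1 + l_i)` of the Γ-series.  (Mathlib's
`Complex.Gamma` vanishes at the poles of `Γ`, so `1/Γ` is `0` there.) -/
def gammaTerm {n : ℕ} (l x : Fin n → ℂ) : ℂ :=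
  ∏ i, Complex.exp (l i * Complex.log (x i)) / Complex.Gamma (1 + l i)

/-- The region `R(ψ̂)`. -/
def Rregion {r n : ℕ} (v : Fin n → Fin r → ℤ) (Fam : Finset (Finset (Fin n)))
    (ψh : Fin n → ℝ) : Set (Fin n → ℂ) :=
  {x | (∀ i, x i ≠ 0 ∧ |Complex.arg (x i)| < Real.pi) ∧
    (fun i => -Real.log (‖x i‖) - ψh i) ∈ CSigma v Fam}

/-- The Γ-series `Φ^{γ,σ}_c` with parameter `β`. -/
def GammaSeries {r n : ℕ} (v : Fin n → Fin r → ℤ) (I0 : Finset (Fin n)) (β : Fin r → ℂ)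
    (γ c : Fin r → ℤ) (x : Fin n → ℂ) : ℂ :=
  ∑' l : (Lset v I0 β c γ), gammaTerm (l : Fin n → ℂ) x

/-- Absolute and uniform-on-compacts convergence of the Γ-series on a set `S`:
for every compact `K ⊆ S`, `∑_{l ∈ L} sup_{x ∈ K} |term_l(x)| < ∞`. -/
def ConvergesOn {r n : ℕ} (v : Fin n → Fin r → ℤ) (I0 : Finset (Fin n)) (β : Fin r → ℂ)
    (γ c : Fin r → ℤ) (S : Set (Fin n → ℂ)) : Prop :=
  ∀ K ⊆ S, IsCompact K →
    Summable (fun l : (Lset v I0 β c γ) =>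
      sSup ((fun x => ‖gammaTerm (l : Fin n → ℂ) x‖) '' K))

/-- `β ∈ ℂ^r` is generic: it lies in no proper affine subspace of `ℂ^r` defined over `ℚ`. -/
def GenericBeta {r : ℕ} (β : Fin r → ℂ) : Prop :=
  ∀ q : Fin r → ℚ, q ≠ 0 → ∀ q0 : ℚ, (∑ j, (q j : ℂ) * β j) ≠ (q0 : ℂ)


lemma vR_mem_sigmaCone {r n : ℕ} (v : Fin n → Fin r → ℤ) {I : Finset (Fin n)} {i : Fin n}
    (hi : i ∈ I) : vR v i ∈ sigmaCone v I := by
  refine ⟨fun j => if j = i then 1 else 0, ?_, ?_, ?_⟩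
  · intro j; dsimp only; split <;> norm_num
  · intro j hj
    by_cases h : j = i
    · exact absurd (h ▸ hi) hj
    · simp [h]
  · simp [ite_smul]

lemma sigmaCone_subset_coneC {r n : ℕ} (v : Fin n → Fin r → ℤ) (I : Finset (Fin n)) :
    sigmaCone v I ⊆ coneC v := by
  rintro x ⟨t, ht0, -, hx⟩
  exact ⟨t, ht0, hx⟩

lemma vR_mem_coneC {r n : ℕ} (v : Fin n → Fin r → ℤ) (i : Fin n) : vR v i ∈ coneC v :=
  sigmaCone_subset_coneC v Finset.univ (vR_mem_sigmaCone v (Finset.mem_univ i))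

lemma sigmaCone_mono {r n : ℕ} (v : Fin n → Fin r → ℤ) {K J : Finset (Fin n)} (h : K ⊆ J) :
    sigmaCone v K ⊆ sigmaCone v J := by
  rintro x ⟨t, ht0, htK, hx⟩
  exact ⟨t, ht0, fun i hi => htK i (fun hiK => hi (h hiK)), hx⟩

theorem statement5
    (r n : ℕ) (hr : 1 ≤ r) (hn : r ≤ n)
    (deg : (Fin r → ℝ) →ₗ[ℝ] ℝ)
    (hdegInt : ∀ m : Fin r → ℤ, ∃ k : ℤ, deg (intVec m) = (k : ℝ))
    (v : Fin n → Fin r → ℤ)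
    (hv_inj : Function.Injective v)
    (hv_span : Submodule.span ℝ (Set.range (vR v)) = ⊤)
    (hv_deg : ∀ i, deg (vR v i) = 1)
    (Fam : Finset (Finset (Fin n))) (hFam : IsFan v Fam)
    (ψ : (Fin r → ℝ) → ℝ) (hψ : StrictSigmaConvex v Fam ψ)
    (c : Fin r → ℝ) (hc : c ∈ coneC v)
    (l : Fin n → ℝ) (hl : ∑ i, l i • vR v i = -c)
    (hneg : ∃ I ∈ Fam, I.card = r ∧ ∀ i, l i < 0 → i ∈ I) :
    (-(∑ i, l i * ψ (vR v i)) ≤ ψ c) ∧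
    ((-(∑ i, l i * ψ (vR v i)) = ψ c) ↔
      ∃ K ∈ Fam, c ∈ sigmaCone v K ∧ ∀ i, l i ≠ 0 → vR v i ∈ sigmaCone v K) := by
  obtain ⟨I, hIFam, hIcard, hIneg⟩ := hneg
  obtain ⟨ℓ, hℓeq, hℓlt⟩ := hψ I hIFam hIcard
  -- `ℓ ≤ ψ` on `C`
  have hle : ∀ x ∈ coneC v, ℓ x ≤ ψ x := by
    intro x hx
    by_cases hxI : x ∈ sigmaCone v I
    · exact le_of_eq (hℓeq x hxI).symm
    · exact le_of_lt (hℓlt x hx hxI)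
  -- `ℓ c = -(∑ i, l i * ℓ (vR v i))`
  have hlc : ℓ c = -(∑ i, l i * ℓ (vR v i)) := by
    have h := congrArg ℓ hl
    rw [map_sum, map_neg] at h
    simp only [map_smul, smul_eq_mul] at h
    linarith
  -- termwise inequality
  have hterm : ∀ i ∈ Finset.univ, l i * ℓ (vR v i) ≤ l i * ψ (vR v i) := by
    intro i _
    rcases lt_or_ge (l i) 0 with h | h
    · have : ψ (vR v i) = ℓ (vR v i) := hℓeq _ (vR_mem_sigmaCone v (hIneg i h))
      rw [this]
    · exact mul_le_mul_of_nonneg_left (hle _ (vR_mem_coneC v i)) h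
  have hsum : ∑ i, l i * ℓ (vR v i) ≤ ∑ i, l i * ψ (vR v i) :=
    Finset.sum_le_sum hterm
  have hmain : -(∑ i, l i * ψ (vR v i)) ≤ ψ c := by
    have h1 : -(∑ i, l i * ψ (vR v i)) ≤ ℓ c := by rw [hlc]; linarith
    linarith [hle c hc]
  refine ⟨hmain, ?_, ?_⟩
  · -- equality → existence of a common cone
    intro heq
    have hℓcψ : ℓ c = ψ c := by
      have h1 : -(∑ i, l i * ψ (vR v i)) ≤ ℓ c := by rw [hlc]; linarith
      linarith [hle c hc]
    have hcI : c ∈ sigmaCone v I := by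
      by_contra hcI
      exact absurd hℓcψ (ne_of_lt (hℓlt c hc hcI))
    have hsumeq : ∑ i, l i * ℓ (vR v i) = ∑ i, l i * ψ (vR v i) := by
      rw [hlc] at hℓcψ; linarith
    have hall := (Finset.sum_eq_sum_iff_of_le hterm).mp hsumeq
    refine ⟨I, hIFam, hcI, ?_⟩
    intro i hli
    rcases lt_or_gt_of_ne hli with h | h
    · exact vR_mem_sigmaCone v (hIneg i h)
    · have hieq : ℓ (vR v i) = ψ (vR v i) :=
        mul_left_cancel₀ (ne_of_gt h) (hall i (Finset.mem_univ i))
      by_contra hvi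
      exact absurd hieq (ne_of_lt (hℓlt _ (vR_mem_coneC v i) hvi))
  · -- existence of a common cone → equality
    rintro ⟨K, hK, hcK, hviK⟩
    obtain ⟨J, hJ, hKJ, hJcard⟩ := hFam.max_cones K hK
    obtain ⟨ℓ', h1, h2⟩ := hψ J hJ hJcard
    have hψc : ψ c = ℓ' c := h1 c (sigmaCone_mono v hKJ hcK)
    have hsum' : ∑ i, l i * ψ (vR v i) = ∑ i, l i * ℓ' (vR v i) := by
      apply Finset.sum_congr rfl
      intro i _
      by_cases hli : l i = 0
      · simp [hli]
      · rw [h1 _ (sigmaCone_mono v hKJ (hviK i hli))]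
    have hlc' : ℓ' c = -(∑ i, l i * ℓ' (vR v i)) := by
      have h := congrArg ℓ' hl
      rw [map_sum, map_neg] at h
      simp only [map_smul, smul_eq_mul] at h
      linarith
    rw [hsum', hψc, hlc']

end BBGKZ
end
end

section
/- Let v ∈ C° be generic, let I ∈ Σ^max be a maximal cone of Σ, and let c, d ∈ σ_I ∩ ℤ^r with c + d = v_I. For a point w in the support of Σ let σ(w) denote the minimal cone of Σ containing w. Then the following are equivalent: (i) for all sufficiently small ε > 0, both c + εv and d − εv lie in the interior of σ_I; (ii) (v + σ(c)) ∩ σ(d) ≠ ∅. -/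
open scoped BigOperators Classical

noncomputable section

namespace BBGKZ

theorem statement12
    (r n : ℕ) (hr : 1 ≤ r) (hn : r ≤ n)
    (deg : (Fin r → ℝ) →ₗ[ℝ] ℝ)
    (hdegInt : ∀ m : Fin r → ℤ, ∃ k : ℤ, deg (intVec m) = (k : ℝ))
    (v : Fin n → Fin r → ℤ)
    (hv_inj : Function.Injective v)
    (hv_span : Submodule.span ℝ (Set.range (vR v)) = ⊤)
    (hv_deg : ∀ i, deg (vR v i) = 1)
    (v0 : Fin r → ℝ) (hv0mem : v0 ∈ interior (coneC v)) (hv0gen : GenericVec v0)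
    (Fam : Finset (Finset (Fin n))) (hFam : IsFan v Fam)
    (I : Finset (Fin n)) (hIF : I ∈ Fam) (hIcard : I.card = r)
    (c d : Fin r → ℤ) (hcI : intVec c ∈ sigmaCone v I) (hdI : intVec d ∈ sigmaCone v I)
    (hcd : c + d = vSum v I)
    (Kc Kd : Finset (Fin n))
    (hKc : IsMinConeOf v Fam Kc (intVec c)) (hKd : IsMinConeOf v Fam Kd (intVec d)) :
    (∀ᶠ ε in nhdsWithin (0 : ℝ) (Set.Ioi 0),
        intVec c + ε • v0 ∈ interior (sigmaCone v I) ∧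
        intVec d - ε • v0 ∈ interior (sigmaCone v I))
      ↔ (∃ y ∈ sigmaCone v Kc, v0 + y ∈ sigmaCone v Kd)
    := by
  classical
  -- `I` is nonempty since `I.card = r ≥ 1`
  haveI hne : Nonempty {x : Fin n // x ∈ I} := by
    rw [Finset.nonempty_coe_sort]
    exact Finset.card_pos.mp (by omega)
  have hindep := hFam.indep I hIF
  have hcardeq : Fintype.card {x : Fin n // x ∈ I} = Module.finrank ℝ (Fin r → ℝ) := by
    rw [Fintype.card_coe, hIcard, Module.finrank_fin_fun]
  set B : Module.Basis {x : Fin n // x ∈ I} ℝ (Fin r → ℝ) :=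
    basisOfLinearIndependentOfCardEqFinrank hindep hcardeq with hBdef
  have hBval : ∀ i : {x : Fin n // x ∈ I}, B i = vR v i.1 := fun i => by
    rw [hBdef, coe_basisOfLinearIndependentOfCardEqFinrank]
  -- converting sums over `Fin n` to sums over `I`
  have hsum : ∀ s : {x : Fin n // x ∈ I} → ℝ,
      (∑ j : Fin n, (if h : j ∈ I then s ⟨j, h⟩ else 0) • vR v j) = ∑ i, s i • B i := by
    intro s
    have h1 : (∑ j : Fin n, (if h : j ∈ I then s ⟨j, h⟩ else 0) • vR v j)
        = ∑ j ∈ I, (if h : j ∈ I then s ⟨j, h⟩ else 0) • vR v j :=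
      (Finset.sum_subset (Finset.subset_univ I)
        (by intro j _ hj; rw [dif_neg hj, zero_smul])).symm
    rw [h1, ← Finset.sum_coe_sort I (fun j => (if h : j ∈ I then s ⟨j, h⟩ else 0) • vR v j)]
    refine Finset.sum_congr rfl fun i _ => ?_
    rw [dif_pos i.2, hBval]
  -- membership in subcones via coordinates
  have hmem : ∀ K : Finset (Fin n), K ⊆ I → ∀ x : Fin r → ℝ,
      x ∈ sigmaCone v K ↔ ((∀ i, 0 ≤ B.repr x i) ∧
        (∀ i : {x : Fin n // x ∈ I}, i.1 ∉ K → B.repr x i = 0)) := by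
    intro K hKI x
    constructor
    · rintro ⟨t, ht0, htK, rfl⟩
      have hx : (∑ j, t j • vR v j) = ∑ i, (fun i : {x : Fin n // x ∈ I} => t i.1) i • B i := by
        rw [← hsum]
        refine Finset.sum_congr rfl fun j _ => ?_
        by_cases h : j ∈ I
        · simp only [dif_pos h]
        · rw [dif_neg h, htK j (fun hj => h (hKI hj)), zero_smul]
      rw [hx]
      rw [B.repr_sum_self]
      exact ⟨fun i => ht0 i.1, fun i hi => htK i.1 hi⟩
    · rintro ⟨h0, hz⟩
      refine ⟨fun j => if h : j ∈ I then B.repr x ⟨j, h⟩ else 0, ?_, ?_, ?_⟩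
      · intro j; by_cases h : j ∈ I
        · simp only [dif_pos h]; exact h0 _
        · simp [dif_neg h]
      · intro j hj; by_cases h : j ∈ I
        · simp only [dif_pos h]; exact hz ⟨j, h⟩ hj
        · simp only [dif_neg h]
      · rw [hsum]; exact (B.sum_repr x).symm
  -- interior of the big cone via coordinates
  have hsigI : sigmaCone v I = B.equivFunL.toHomeomorph ⁻¹' (Set.univ.pi fun _ => Set.Ici (0:ℝ)) := by
    ext x
    rw [hmem I subset_rfl x]
    simp only [Set.mem_preimage, Set.mem_pi, Set.mem_univ, Set.mem_Ici, forall_true_left]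
    constructor
    · rintro ⟨h0, -⟩; exact fun i => h0 i
    · intro h; exact ⟨fun i => h i, fun i hi => absurd i.2 hi⟩
  have hint : ∀ x : Fin r → ℝ, x ∈ interior (sigmaCone v I) ↔ ∀ i, 0 < B.repr x i := by
    intro x
    rw [hsigI, ← Homeomorph.preimage_interior, interior_pi_set Set.finite_univ]
    simp only [Set.mem_preimage, Set.mem_pi, Set.mem_univ, Function.comp, interior_Ici,
      Set.mem_Ioi, forall_true_left]
    exact Iff.of_eq rfl
  have hKcI : Kc ⊆ I := hKc.2.2 I hIF hcI
  have hKdI : Kd ⊆ I := hKd.2.2 I hIF hdI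
  have hcKc := (hmem Kc hKcI _).mp hKc.2.1
  have hdKd := (hmem Kd hKdI _).mp hKd.2.1
  have hcnn : ∀ i, 0 ≤ B.repr (intVec c) i := ((hmem I subset_rfl _).mp hcI).1
  have hdnn : ∀ i, 0 ≤ B.repr (intVec d) i := ((hmem I subset_rfl _).mp hdI).1
  -- c + d has all coordinates 1
  have hone : ∀ i, B.repr (intVec c) i + B.repr (intVec d) i = 1 := by
    intro i
    have h1 : intVec c + intVec d = ∑ i, (1:ℝ) • B i := by
      have h2 : intVec c + intVec d = intVec (c + d) := by
        funext j; simp [intVec]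
      rw [h2, hcd]
      have h3 : intVec (vSum v I) = ∑ j ∈ I, vR v j := by
        funext j
        simp only [intVec, vSum, Finset.sum_apply, vR]
        push_cast
        rfl
      rw [h3, ← Finset.sum_coe_sort I (fun j => vR v j)]
      refine Finset.sum_congr rfl fun i _ => ?_
      rw [one_smul, hBval]
    have h4 := congrArg (fun w => B.repr w i) h1
    simp only [map_add, Finsupp.add_apply] at h4
    rw [h4, B.repr_sum_self]
  -- minimality: the minimal cones are exactly the coordinate supports
  have hsupp : ∀ (K : Finset (Fin n)) (w : Fin r → ℝ), IsMinConeOf v Fam K w → K ⊆ I →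
      ∀ i : {x : Fin n // x ∈ I}, B.repr w i = 0 → i.1 ∉ K := by
    intro K w hK hKI' i hw0 hiK
    have herase : K.erase i.1 ∈ Fam := hFam.downward K hK.1 _ (Finset.erase_subset _ _)
    have hwK := (hmem K hKI' w).mp hK.2.1
    have hwmem : w ∈ sigmaCone v (K.erase i.1) := by
      rw [hmem _ (Finset.Subset.trans (Finset.erase_subset _ _) hKI') w]
      refine ⟨hwK.1, fun j hj => ?_⟩
      rw [Finset.mem_erase] at hj
      push_neg at hj
      by_cases hji : j = i
      · rw [hji]; exact hw0
      · exact hwK.2 j (hj (fun h => hji (Subtype.ext h)))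
    have hsub := hK.2.2 _ herase hwmem
    exact Finset.notMem_erase i.1 K (hsub hiK)
  -- all coordinates of v0 are nonzero, by genericity
  have ha : ∀ i, B.repr v0 i ≠ 0 := by
    intro i0 h0
    refine hv0gen (v '' ((I.erase i0.1) : Set (Fin n))) ?_ ?_
    · rw [Set.image_image]
      have himeq : (intVec ∘ v) '' ((I.erase i0.1) : Set (Fin n))
          = ((I.erase i0.1).image (vR v) : Set (Fin r → ℝ)) := by
        rw [Finset.coe_image]; rfl
      intro htop
      rw [show (fun x => intVec (v x)) = intVec ∘ v from rfl, himeq] at htop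
      have h1 := finrank_span_finset_le_card (R := ℝ) ((I.erase i0.1).image (vR v))
      rw [Set.finrank, htop, finrank_top, Module.finrank_fin_fun] at h1
      have h2 : ((I.erase i0.1).image (vR v)).card ≤ (I.erase i0.1).card :=
        Finset.card_image_le
      rw [Finset.card_erase_of_mem i0.2, hIcard] at h2
      omega
    · rw [Set.image_image]
      have hsub : ∀ i : {x : Fin n // x ∈ I}, i ≠ i0 →
          vR v i.1 ∈ (fun x => intVec (v x)) '' ((I.erase i0.1) : Set (Fin n)) := by
        intro i hi
        exact ⟨i.1, by
          simp only [Finset.coe_erase, Set.mem_diff, Finset.mem_coe, Set.mem_singleton_iff]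
          exact ⟨i.2, fun h => hi (Subtype.ext h)⟩, rfl⟩
      rw [← B.sum_repr v0]
      refine Submodule.sum_mem _ fun i _ => ?_
      by_cases hii : i = i0
      · rw [hii, h0, zero_smul]; exact Submodule.zero_mem _
      · exact Submodule.smul_mem _ _ (Submodule.subset_span (by rw [hBval]; exact hsub i hii))
  constructor
  · -- forward direction
    intro hev
    obtain ⟨ε, hprop, hε⟩ := (hev.and eventually_mem_nhdsWithin).exists
    rw [Set.mem_Ioi] at hε
    have hεc := (hint _).mp hprop.1
    have hεd := (hint _).mp hprop.2
    have hcoordc : ∀ i, 0 < B.repr (intVec c) i + ε * B.repr v0 i := by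
      intro i
      have := hεc i
      rwa [map_add, map_smul, Finsupp.add_apply, Finsupp.smul_apply, smul_eq_mul] at this
    have hcoordd : ∀ i, 0 < B.repr (intVec d) i - ε * B.repr v0 i := by
      intro i
      have := hεd i
      rwa [map_sub, map_smul, Finsupp.sub_apply, Finsupp.smul_apply, smul_eq_mul] at this
    have hM1 : ∀ i, B.repr (intVec c) i = 0 → 0 < B.repr v0 i := by
      intro i hi
      have := hcoordc i
      rw [hi, zero_add] at this
      by_contra hcon
      push_neg at hcon
      nlinarith
    have hM2 : ∀ i, B.repr (intVec d) i = 0 → B.repr v0 i < 0 := by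
      intro i hi
      have := hcoordd i
      rw [hi, zero_sub, neg_pos] at this
      nlinarith
    refine ⟨∑ i, (if B.repr (intVec c) i = 0 then 0 else max 0 (- B.repr v0 i)) • B i, ?_, ?_⟩
    · rw [hmem Kc hKcI _]
      rw [B.repr_sum_self]
      constructor
      · intro i
        by_cases h : B.repr (intVec c) i = 0
        · simp [h]
        · simp [h, le_max_left]
      · intro i hi
        have : B.repr (intVec c) i = 0 := by
          by_contra h
          exact hi (by
            by_contra hik
            exact h (hcKc.2 i hik))
        simp [this]
    · rw [hmem Kd hKdI _]
      have hrep : ∀ i, B.repr (v0 + ∑ i, (if B.repr (intVec c) i = 0 then 0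
          else max 0 (- B.repr v0 i)) • B i) i
          = B.repr v0 i + (if B.repr (intVec c) i = 0 then 0 else max 0 (- B.repr v0 i)) := by
        intro i
        rw [map_add, Finsupp.add_apply, B.repr_sum_self]
      constructor
      · intro i
        rw [hrep i]
        by_cases h : B.repr (intVec c) i = 0
        · rw [if_pos h, add_zero]; exact (hM1 i h).le
        · rw [if_neg h]
          have : - B.repr v0 i ≤ max 0 (- B.repr v0 i) := le_max_right _ _
          linarith
      · intro i hi
        rw [hrep i]
        have hd0 : B.repr (intVec d) i = 0 := by
          by_contra h
          exact hi (by
            by_contra hik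
            exact h (hdKd.2 i hik))
        have hc1 : B.repr (intVec c) i = 1 := by have := hone i; linarith
        rw [if_neg (by rw [hc1]; norm_num)]
        have hv0neg := hM2 i hd0
        rw [max_eq_right (by linarith)]
        ring
  · -- reverse direction
    rintro ⟨y, hy, hvy⟩
    have hy' := (hmem Kc hKcI y).mp hy
    have hvy' := (hmem Kd hKdI _).mp hvy
    have hM1 : ∀ i, B.repr (intVec c) i = 0 → 0 < B.repr v0 i := by
      intro i hi
      have h1 : B.repr y i = 0 := hy'.2 i (hsupp Kc _ hKc hKcI i hi)
      have h2 : 0 ≤ B.repr (v0 + y) i := hvy'.1 i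
      rw [map_add, Finsupp.add_apply, h1, add_zero] at h2
      exact lt_of_le_of_ne h2 (Ne.symm (ha i))
    have hM2 : ∀ i, B.repr (intVec d) i = 0 → B.repr v0 i < 0 := by
      intro i hi
      have h1 : B.repr (v0 + y) i = 0 := hvy'.2 i (hsupp Kd _ hKd hKdI i hi)
      rw [map_add, Finsupp.add_apply] at h1
      have h2 : 0 ≤ B.repr y i := hy'.1 i
      have h3 : B.repr v0 i ≤ 0 := by linarith
      exact lt_of_le_of_ne h3 (ha i)
    have hc' : ∀ i, ∀ᶠ ε in nhdsWithin (0:ℝ) (Set.Ioi 0),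
        0 < B.repr (intVec c) i + ε * B.repr v0 i := by
      intro i
      rcases eq_or_lt_of_le (hcnn i) with h | h
      · filter_upwards [eventually_mem_nhdsWithin] with ε hε
        rw [Set.mem_Ioi] at hε
        rw [← h, zero_add]
        exact mul_pos hε (hM1 i h.symm)
      · have htend : Filter.Tendsto (fun ε : ℝ => B.repr (intVec c) i + ε * B.repr v0 i)
            (nhds 0) (nhds (B.repr (intVec c) i)) := by
          have hcont : Continuous (fun ε : ℝ => B.repr (intVec c) i + ε * B.repr v0 i) := by
            fun_prop
          simpa using hcont.tendsto 0
        exact (htend.eventually (eventually_gt_nhds h)).filter_mono nhdsWithin_le_nhds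
    have hd' : ∀ i, ∀ᶠ ε in nhdsWithin (0:ℝ) (Set.Ioi 0),
        0 < B.repr (intVec d) i - ε * B.repr v0 i := by
      intro i
      rcases eq_or_lt_of_le (hdnn i) with h | h
      · filter_upwards [eventually_mem_nhdsWithin] with ε hε
        rw [Set.mem_Ioi] at hε
        rw [← h, zero_sub, neg_pos]
        exact mul_neg_of_pos_of_neg hε (hM2 i h.symm)
      · have htend : Filter.Tendsto (fun ε : ℝ => B.repr (intVec d) i - ε * B.repr v0 i)
            (nhds 0) (nhds (B.repr (intVec d) i)) := by
          have hcont : Continuous (fun ε : ℝ => B.repr (intVec d) i - ε * B.repr v0 i) := by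
            fun_prop
          simpa using hcont.tendsto 0
        exact (htend.eventually (eventually_gt_nhds h)).filter_mono nhdsWithin_le_nhds
    filter_upwards [Filter.eventually_all.mpr hc', Filter.eventually_all.mpr hd'] with ε h1 h2
    constructor
    · rw [hint]
      intro i
      rw [map_add, map_smul, Finsupp.add_apply, Finsupp.smul_apply, smul_eq_mul]
      exact h1 i
    · rw [hint]
      intro i
      rw [map_sub, map_smul, Finsupp.sub_apply, Finsupp.smul_apply, smul_eq_mul]
      exact h2 i


end BBGKZ
end
end
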